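/- Let H = F/U be an ordered factor hyperfield with quotient map τ : F → H, and let T ⊆ F^d. Then conv(τ(T)) equals the union, over all T' ⊆ F^d with τ(T') = τ(T), of τ(conv(T')), where conv(T') is the ordinary convex hull over the ordered field F. -/

import Mathlib

/-- The data of a hyperfield: a multivalued addition, multiplication,
negation, zero and one. -/
structure HyperfieldData (H : Type*) where
  hadd : H → H → Set H
  mul : H → H → H
  neg : H → H
  zero : H
  one : H

/-- The hyperfield axioms. -/
structure IsHyperfield {H : Type*} (D : HyperfieldData H) : Prop where
  hadd_nonempty : ∀ a b, (D.hadd a b).Nonempty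
  hadd_comm : ∀ a b, D.hadd a b = D.hadd b a
  hadd_assoc : ∀ a b c, (⋃ x ∈ D.hadd a b, D.hadd x c) = ⋃ y ∈ D.hadd b c, D.hadd a y
  zero_hadd : ∀ a, D.hadd D.zero a = {a}
  neg_mem : ∀ a, D.zero ∈ D.hadd a (D.neg a)
  neg_unique : ∀ a b, D.zero ∈ D.hadd a b → b = D.neg a
  reverse : ∀ a b c, a ∈ D.hadd b c ↔ c ∈ D.hadd a (D.neg b)
  mul_comm : ∀ a b, D.mul a b = D.mul b a
  mul_assoc : ∀ a b c, D.mul (D.mul a b) c = D.mul a (D.mul b c)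
  one_mul : ∀ a, D.mul D.one a = a
  mul_inv : ∀ a, a ≠ D.zero → ∃ b, D.mul a b = D.one
  zero_mul : ∀ a, D.mul D.zero a = D.zero
  distrib : ∀ a b c, D.mul a '' D.hadd b c = D.hadd (D.mul a b) (D.mul a c)
  zero_ne_one : D.zero ≠ D.one

/-- An ordering on a hyperfield: a set of positive elements closed under
hyperaddition and multiplication such that `H = P ⊔ {0} ⊔ (-P)`. -/
def IsOrdering {H : Type*} (D : HyperfieldData H) (P : Set H) : Prop :=
  (∀ a ∈ P, ∀ b ∈ P, D.hadd a b ⊆ P) ∧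
  (∀ a ∈ P, ∀ b ∈ P, D.mul a b ∈ P) ∧
  (∀ x : H, x ∈ P ∨ x = D.zero ∨ x ∈ D.neg '' P) ∧
  D.zero ∉ P ∧ D.zero ∉ D.neg '' P ∧ Disjoint P (D.neg '' P)

/-- A hyperfield homomorphism. -/
def IsHom {H1 H2 : Type*} (D1 : HyperfieldData H1) (D2 : HyperfieldData H2)
    (f : H1 → H2) : Prop :=
  (∀ a b, f '' D1.hadd a b ⊆ D2.hadd (f a) (f b)) ∧
  (∀ a b, f (D1.mul a b) = D2.mul (f a) (f b)) ∧
  f D1.one = D2.one ∧ f D1.zero = D2.zero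

/-- The iterated hypersum of a finite list of elements. -/
def listSum {H : Type*} (D : HyperfieldData H) : List H → Set H
  | [] => {D.zero}
  | x :: xs => ⋃ s ∈ listSum D xs, D.hadd x s

/-- The coordinatewise set `a ⊙ p ⊞ b ⊙ q ⊆ H^ι`. -/
def combo {H ι : Type*} (D : HyperfieldData H) (a b : H) (p q : ι → H) : Set (ι → H) :=
  {r | ∀ i, r i ∈ D.hadd (D.mul a (p i)) (D.mul b (q i))}

/-- A convex subset of `H^ι`. -/
def IsConvexSet {H ι : Type*} (D : HyperfieldData H) (P : Set H) (S : Set (ι → H)) : Prop :=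
  ∀ p ∈ S, ∀ q ∈ S, ∀ a ∈ P, ∀ b ∈ P, D.one ∈ D.hadd a b → combo D a b p q ⊆ S

/-- A conic subset of `H^ι`. -/
def IsConicSet {H ι : Type*} (D : HyperfieldData H) (P : Set H) (S : Set (ι → H)) : Prop :=
  ∀ p ∈ S, ∀ q ∈ S, ∀ a ∈ P, ∀ b ∈ P, combo D a b p q ⊆ S

/-- Membership in the convex hull of `T`: `q` lies in some finite convex
combination of points of `T` (repetition allowed). -/
def InConv {H ι : Type*} (D : HyperfieldData H) (P : Set H) (T : Set (ι → H))
    (q : ι → H) : Prop :=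
  ∃ l : List (H × (ι → H)), l ≠ [] ∧ (∀ x ∈ l, x.1 ∈ P ∧ x.2 ∈ T) ∧
    D.one ∈ listSum D (l.map Prod.fst) ∧
    ∀ i, q i ∈ listSum D (l.map fun x => D.mul x.1 (x.2 i))

/-- Membership in the conic hull of `T`. -/
def InCone {H ι : Type*} (D : HyperfieldData H) (P : Set H) (T : Set (ι → H))
    (q : ι → H) : Prop :=
  ∃ l : List (H × (ι → H)), l ≠ [] ∧ (∀ x ∈ l, x.1 ∈ P ∧ x.2 ∈ T) ∧
    ∀ i, q i ∈ listSum D (l.map fun x => D.mul x.1 (x.2 i))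

/-- The setoid on `F` whose classes are the cosets of the multiplicative
subgroup `U ⊆ Fˣ`. -/
def factorSetoid {F : Type*} [Field F] (U : Subgroup Fˣ) : Setoid F where
  r a b := ∃ u : Fˣ, u ∈ U ∧ b = a * u
  iseqv := ⟨fun a => ⟨1, U.one_mem, by simp⟩,
    fun {a b} h => by
      obtain ⟨u, hu, rfl⟩ := h
      exact ⟨u⁻¹, U.inv_mem hu, by rw [mul_assoc]; simp⟩,
    fun {a b c} h1 h2 => by
      obtain ⟨u, hu, rfl⟩ := h1
      obtain ⟨v, hv, rfl⟩ := h2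
      exact ⟨u * v, U.mul_mem hu hv, by rw [Units.val_mul, mul_assoc]⟩⟩

/-- The underlying set of the factor hyperfield `F/U`. -/
abbrev FQuot {F : Type*} [Field F] (U : Subgroup Fˣ) := Quotient (factorSetoid U)

/-- The quotient map `τ : F → F/U`. -/
def tauF {F : Type*} [Field F] (U : Subgroup Fˣ) : F → FQuot U :=
  Quotient.mk (factorSetoid U)

/-- The hyperfield data of the factor hyperfield `F/U`. -/
noncomputable def factorData {F : Type*} [Field F] (U : Subgroup Fˣ) :
    HyperfieldData (FQuot U) where
  hadd x y := {z | ∃ a b : F, tauF U a = x ∧ tauF U b = y ∧ tauF U (a + b) = z}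
  mul x y := tauF U (Quotient.out x * Quotient.out y)
  neg x := tauF U (-(Quotient.out x))
  zero := tauF U 0
  one := tauF U 1

section FactorLemmas

variable {F : Type*} [Field F] (U : Subgroup Fˣ)

lemma tau_sound' {a b : F} (h : ∃ u : Fˣ, u ∈ U ∧ b = a * u) : tauF U a = tauF U b :=
  Quotient.sound h

lemma tau_exact' {a b : F} (h : tauF U a = tauF U b) : ∃ u : Fˣ, u ∈ U ∧ b = a * u :=
  Quotient.exact h

lemma tau_unit_mul (a : F) {u : Fˣ} (hu : u ∈ U) : tauF U (a * u) = tauF U a :=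
  (tau_sound' U ⟨u, hu, rfl⟩).symm

lemma tau_mul_congr {a b x y : F} (h1 : tauF U a = tauF U x) (h2 : tauF U b = tauF U y) :
    tauF U (a * b) = tauF U (x * y) := by
  obtain ⟨u, hu, hx⟩ := tau_exact' U h1
  obtain ⟨v, hv, hy⟩ := tau_exact' U h2
  refine tau_sound' U ⟨u * v, U.mul_mem hu hv, ?_⟩
  rw [hx, hy, Units.val_mul]; ring

lemma factor_mul (a b : F) :
    (factorData U).mul (tauF U a) (tauF U b) = tauF U (a * b) := by
  show tauF U (Quotient.out (tauF U a) * Quotient.out (tauF U b)) = tauF U (a * b)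
  exact tau_mul_congr U (Quotient.out_eq (tauF U a)) (Quotient.out_eq (tauF U b))

lemma tau_add_mem (a b : F) :
    tauF U (a + b) ∈ (factorData U).hadd (tauF U a) (tauF U b) :=
  ⟨a, b, rfl, rfl, rfl⟩

lemma listSum_factor_iff (hs : List (FQuot U)) (z : FQuot U) :
    z ∈ listSum (factorData U) hs ↔
      ∃ ds : List F, ds.map (tauF U) = hs ∧ tauF U ds.sum = z := by
  constructor
  · induction hs generalizing z with
    | nil =>
      intro hz
      refine ⟨[], rfl, ?_⟩
      simpa [listSum, factorData] using hz.symm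
    | cons h hs ih =>
      intro hz
      simp only [listSum, Set.mem_iUnion] at hz
      obtain ⟨s, hs', a, b, rfl, hb, rfl⟩ := hz
      obtain ⟨ds, hmap, hsum⟩ := ih _ hs'
      obtain ⟨u, hu, hbu⟩ := tau_exact' U (hsum.trans hb.symm : tauF U ds.sum = tauF U b)
      refine ⟨a :: ds.map (fun x => x * u), ?_, ?_⟩
      · simp only [List.map_cons, List.map_map, List.cons.injEq, true_and]
        rw [← hmap]
        congr 1
        funext x
        exact tau_unit_mul U x hu
      · have hms : (ds.map (fun x => x * (u : F))).sum = ds.sum * u := by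
          rw [List.sum_map_mul_right]; simp
        rw [List.sum_cons, hms, ← hbu]
  · rintro ⟨ds, hmap, rfl⟩
    induction ds generalizing hs with
    | nil =>
      simp only [List.map_nil] at hmap
      subst hmap
      simp [listSum, factorData]
    | cons d ds ih =>
      simp only [List.map_cons] at hmap
      subst hmap
      simp only [listSum, Set.mem_iUnion, List.sum_cons]
      exact ⟨tauF U ds.sum, ih _ rfl, tau_add_mem U d ds.sum⟩

end FactorLemmas

section OrderedLemmas

variable {F : Type*} [Field F] [LinearOrder F] [IsStrictOrderedRing F] (U : Subgroup Fˣ)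

lemma rep_pos (hU : ∀ u : Fˣ, u ∈ U → (0 : F) < (u : F)) {x : FQuot U} (hx : x ∈ tauF U '' {y : F | 0 < y}) {c : F}
    (hc : tauF U c = x) : 0 < c := by
  obtain ⟨b, hb, rfl⟩ := hx
  obtain ⟨u, hu, rfl⟩ := tau_exact' U hc.symm
  exact mul_pos hb (hU u hu)

lemma tau_div_congr {x y : F} (c : F) (h : tauF U x = tauF U y) :
    tauF U (x / c) = tauF U (y / c) := by
  obtain ⟨u, hu, rfl⟩ := tau_exact' U h
  exact tau_sound' U ⟨u, hu, by ring⟩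

lemma list_sum_fin {α : Type*} [AddCommMonoid α] (ds : List α) {m : ℕ}
    (h : ds.length = m) : ∑ k : Fin m, ds.get (Fin.cast h.symm k) = ds.sum := by
  subst h
  rw [← List.sum_ofFn]
  congr 1
  exact List.ofFn_get ds

end OrderedLemmas

section MapGet

lemma map_get_of_eq {α β γ : Type*} {l1 : List α} {f : α → β} {l2 : List γ} {g : γ → β}
    (h : l1.map f = l2.map g) {k : ℕ} (hk1 : k < l1.length) (hk2 : k < l2.length) :
    f (l1[k]'hk1) = g (l2[k]'hk2) := by
  have h2 : (l1.map f)[k]'(by simpa using hk1) = (l2.map g)[k]'(by simpa using hk2) := by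
    simp only [h]
  simpa using h2

lemma list_sum_fin' {α : Type*} [AddCommMonoid α] (ds : List α) {m : ℕ}
    (h : ds.length = m) : ∑ k : Fin m, ds[(k : ℕ)]'(by omega) = ds.sum := by
  subst h
  rw [← List.sum_ofFn]
  congr 1
  exact List.ofFn_getElem

end MapGet

/-- over an ordered factor hyperfield `H = F/U`,
`conv(τ(T)) = ⋃_{τ(T') = τ(T)} τ(conv(T'))`. -/
theorem stmt15 {F : Type*} [Field F] [LinearOrder F] [IsStrictOrderedRing F] (U : Subgroup Fˣ)
    (hU : ∀ u : Fˣ, u ∈ U → (0 : F) < (u : F)) {d : ℕ}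
    (T : Set (Fin d → F)) (q : Fin d → FQuot U) :
    InConv (factorData U) (tauF U '' {x : F | 0 < x})
        ((fun p : Fin d → F => tauF U ∘ p) '' T) q ↔
      ∃ T' : Set (Fin d → F),
        (fun p : Fin d → F => tauF U ∘ p) '' T' =
          (fun p : Fin d → F => tauF U ∘ p) '' T ∧
        q ∈ (fun p : Fin d → F => tauF U ∘ p) '' (convexHull F T') := by
  classical
  constructor
  · rintro ⟨l, hl0, hlm, h1, hq⟩
    set m := l.length with hm
    have hmem : ∀ k : Fin m, l[(k : ℕ)] ∈ l := fun k => List.getElem_mem k.isLt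
    -- choose representatives for the points
    have ht : ∀ k : Fin m, ∃ t ∈ T, (tauF U ∘ t) = (l[(k : ℕ)]).2 := by
      intro k
      obtain ⟨-, x, hx, hxτ⟩ := hlm _ (hmem k)
      exact ⟨x, hx, hxτ⟩
    choose t htT htτ using ht
    -- representatives for the coefficients
    obtain ⟨ds, hdsmap, hds1⟩ := (listSum_factor_iff U _ _).mp h1
    have hlen : ds.length = m := by
      have := congrArg List.length hdsmap; simpa using this
    set A : Fin m → F := fun k => ds[(k : ℕ)]'(by omega) with hAdef
    have hA : ∀ k : Fin m, tauF U (A k) = (l[(k : ℕ)]).1 := fun k =>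
      map_get_of_eq hdsmap (by omega) k.isLt
    have hApos : ∀ k, 0 < A k := fun k =>
      rep_pos U hU (hlm _ (hmem k)).1 (hA k)
    -- the sum of ds is a positive unit representing 1
    have hds1' : tauF U ds.sum = tauF U 1 := hds1
    obtain ⟨u₀, hu₀, hu₀e⟩ := tau_exact' U hds1'
    have hS : 0 < ds.sum := by nlinarith [hU u₀ hu₀, hu₀e]
    set S := ds.sum with hSdef
    -- representatives for the coordinates
    have hcs : ∀ i, ∃ c : List F, c.map (tauF U) =
        l.map (fun x => (factorData U).mul x.1 (x.2 i)) ∧ tauF U c.sum = q i :=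
      fun i => (listSum_factor_iff U _ _).mp (hq i)
    choose cs hcsmap hcsq using hcs
    have hclen : ∀ i, (cs i).length = m := by
      intro i
      have := congrArg List.length (hcsmap i); simpa using this
    set C : Fin m → Fin d → F := fun k i => (cs i)[(k : ℕ)]'(by rw [hclen i]; omega)
      with hCdef
    have hC : ∀ (k : Fin m) (i : Fin d), tauF U (C k i) = tauF U (A k * t k i) := by
      intro k i
      have h2 := map_get_of_eq (hcsmap i) (k := (k : ℕ))
        (by rw [hclen i]; omega) k.isLt
      have h3 : (l[(k : ℕ)]).2 i = tauF U (t k i) := by rw [← htτ k]; rfl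
      rw [show tauF U (C k i) = (factorData U).mul (l[(k : ℕ)]).1 ((l[(k : ℕ)]).2 i)
        from h2, ← hA k, h3, factor_mul]
    -- the convex combination over F
    set β : Fin m → F := fun k => A k / S with hβdef
    set t' : Fin m → Fin d → F := fun k i => C k i * S / A k with ht'def
    have hβpos : ∀ k, 0 < β k := fun k => div_pos (hApos k) hS
    have hAsum : ∑ k, A k = S := list_sum_fin' ds hlen
    have hβsum : ∑ k, β k = 1 := by
      rw [hβdef, ← Finset.sum_div, hAsum, div_self hS.ne']
    have ht'τ : ∀ k i, tauF U (t' k i) = tauF U (t k i) := by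
      intro k i
      have h4 : tauF U (C k i * S) = tauF U (A k * t k i * 1) :=
        tau_mul_congr U (hC k i) hds1'
      have h5 := tau_div_congr U (A k) h4
      calc tauF U (t' k i) = tauF U (A k * t k i * 1 / A k) := h5
        _ = tauF U (t k i) := by
            rw [mul_one, mul_div_cancel_left₀ _ (hApos k).ne']
    have hcomb : ∀ i, ∑ k, β k * t' k i = (cs i).sum := by
      intro i
      rw [← list_sum_fin' (cs i) (hclen i)]
      refine Finset.sum_congr rfl fun k _ => ?_
      show A k / S * (C k i * S / A k) = C k i
      have h1 : A k ≠ 0 := (hApos k).ne'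
      have h2 : S ≠ 0 := hS.ne'
      field_simp
    refine ⟨T ∪ Set.range t', ?_, fun i => ∑ k, β k * t' k i, ?_, ?_⟩
    · rw [Set.image_union]
      apply Set.union_eq_self_of_subset_right
      rintro x ⟨y, ⟨k, rfl⟩, rfl⟩
      exact ⟨t k, htT k, funext fun i => (ht'τ k i).symm⟩
    · have hz' : ∀ k ∈ Finset.univ (α := Fin m), t' k ∈ T ∪ Set.range t' :=
        fun k _ => Or.inr ⟨k, rfl⟩
      have hw' : ∀ k ∈ Finset.univ (α := Fin m), 0 ≤ β k := fun k _ => (hβpos k).le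
      have hws' : (0 : F) < ∑ k : Fin m, β k := by rw [hβsum]; exact one_pos
      have hmass := Finset.centerMass_mem_convexHull (Finset.univ (α := Fin m))
        hw' hws' hz'
      have heq : Finset.univ.centerMass β t' = fun i => ∑ k, β k * t' k i := by
        rw [Finset.centerMass_eq_of_sum_1 _ _ hβsum]
        funext i
        simp [Finset.sum_apply]
      rwa [heq] at hmass
    · funext i
      show tauF U (∑ k, β k * t' k i) = q i
      rw [hcomb i]
      exact hcsq i
  · rintro ⟨T', hT', p, hp, rfl⟩
    rw [convexHull_eq] at hp
    obtain ⟨ι, tset, w, z, hw0, hw1, hz, hcm⟩ := hp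
    set tpos := tset.filter (fun i => 0 < w i) with htpos
    have hsub : tpos ⊆ tset := Finset.filter_subset _ _
    have hzero : ∀ i ∈ tset, i ∉ tpos → w i = 0 := by
      intro i hi hni
      have h0 := hw0 i hi
      by_contra hne
      exact hni (Finset.mem_filter.mpr ⟨hi, lt_of_le_of_ne h0 (Ne.symm hne)⟩)
    have hsum : ∑ i ∈ tpos, w i = 1 := by
      rw [Finset.sum_subset hsub hzero, hw1]
    have hvec : ∀ j, ∑ i ∈ tpos, w i * z i j = p j := by
      intro j
      have : tset.centerMass w z = ∑ i ∈ tset, w i • z i :=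
        Finset.centerMass_eq_of_sum_1 _ _ hw1
      rw [this] at hcm
      rw [Finset.sum_subset hsub (fun i hi hni => by rw [hzero i hi hni]; ring)]
      calc ∑ i ∈ tset, w i * z i j = (∑ i ∈ tset, w i • z i) j := by
            simp [Finset.sum_apply]
        _ = p j := by rw [hcm]
    refine ⟨tpos.toList.map (fun i => (tauF U (w i), tauF U ∘ z i)), ?_, ?_, ?_, ?_⟩
    · have hne : tpos.Nonempty := by
        by_contra h
        rw [Finset.not_nonempty_iff_eq_empty] at h
        rw [h] at hsum
        simp at hsum
      intro h
      rw [List.map_eq_nil_iff] at h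
      rw [Finset.toList_eq_nil] at h
      exact (Finset.nonempty_iff_ne_empty.mp hne) h
    · rintro x hx
      rw [List.mem_map] at hx
      obtain ⟨i, hi, rfl⟩ := hx
      rw [Finset.mem_toList] at hi
      refine ⟨⟨w i, (Finset.mem_filter.mp hi).2, rfl⟩, ?_⟩
      have : (fun p : Fin d → F => tauF U ∘ p) (z i) ∈
          (fun p : Fin d → F => tauF U ∘ p) '' T' :=
        ⟨z i, hz i (hsub hi), rfl⟩
      rw [hT'] at this
      exact this
    · rw [listSum_factor_iff]
      refine ⟨tpos.toList.map w, ?_, ?_⟩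
      · simp [List.map_map, Function.comp_def]
      · rw [show ((tpos.toList.map w).sum) = ∑ i ∈ tpos, w i from
          Finset.sum_map_toList _ _, hsum]
        rfl
    · intro j
      rw [listSum_factor_iff]
      refine ⟨tpos.toList.map (fun i => w i * z i j), ?_, ?_⟩
      · simp only [List.map_map]
        refine List.map_congr_left fun i _ => ?_
        show tauF U (w i * z i j) = (factorData U).mul (tauF U (w i)) (tauF U (z i j))
        rw [factor_mul]
      · rw [show ((tpos.toList.map (fun i => w i * z i j)).sum)
          = ∑ i ∈ tpos, w i * z i j from Finset.sum_map_toList _ _, hvec j]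
        rfl
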